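/- Let S be a finite set, p̃ a strictly positive probability mass function on S, and s : S → ℝ not constant. For every c strictly between min_y s_y and max_y s_y, there exists a unique β* ∈ ℝ such that the tilted distribution q_{β*}(y) = p̃(y) e^{β* s_y}/Z(β*) satisfies Σ_y q_{β*}(y) s_y = c. -/

import Mathlib

open Real Finset

lemma aux_pos {S : Type*} [Fintype S] (p s : S → ℝ) (c : ℝ)
    (hp : ∀ y, 0 < p y) (y0 : S) (hy0 : c < s y0) :
    ∃ β : ℝ, 0 < ∑ y, p y * Real.exp (β * (s y - c)) * (s y - c) := by
  set M := ∑ y, p y * |s y - c| with hM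
  have hM0 : 0 ≤ M := Finset.sum_nonneg fun y _ => mul_nonneg (hp y).le (abs_nonneg _)
  set d := s y0 - c with hd
  have hd0 : 0 < d := by simp [hd]; linarith
  have hp0 := hp y0
  set A := (M + 1) / (p y0 * d) with hA
  have hA0 : 0 < A := by positivity
  refine ⟨max 0 (Real.log A / d), ?_⟩
  set β := max 0 (Real.log A / d) with hβ
  have hβ0 : 0 ≤ β := le_max_left _ _
  have hexp : A ≤ Real.exp (β * d) := by
    rw [← Real.exp_log hA0]
    apply Real.exp_le_exp.mpr
    have hle : Real.log A / d ≤ β := le_max_right _ _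
    calc Real.log A = (Real.log A / d) * d := by field_simp
    _ ≤ β * d := by nlinarith
  have hmain : M + 1 ≤ p y0 * Real.exp (β * d) * d := by
    have h := mul_le_mul_of_nonneg_left hexp (le_of_lt hp0)
    have h2 := mul_le_mul_of_nonneg_right h (le_of_lt hd0)
    calc M + 1 = p y0 * A * d := by rw [hA]; field_simp
    _ ≤ p y0 * Real.exp (β * d) * d := h2
  -- each term plus p y * |s y - c| is nonneg
  have hterm : ∀ y : S, 0 ≤ p y * Real.exp (β * (s y - c)) * (s y - c) + p y * |s y - c| := by
    intro y
    rcases le_or_gt c (s y) with h | h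
    · have h1 : 0 ≤ s y - c := by linarith
      have h2 := (hp y).le
      positivity
    · have h1 : |s y - c| = -(s y - c) := abs_of_neg (by linarith)
      have h2 : Real.exp (β * (s y - c)) ≤ 1 := by
        apply Real.exp_le_one_iff.mpr
        have : s y - c < 0 := by linarith
        nlinarith
      have h3 : p y * 1 * (s y - c) ≤ p y * Real.exp (β * (s y - c)) * (s y - c) :=
        mul_le_mul_of_nonpos_right
          (by nlinarith [hp y] : p y * Real.exp (β * (s y - c)) ≤ p y * 1)
          (by linarith : s y - c ≤ 0)
      rw [h1]; nlinarith [hp y]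
  have hsum : p y0 * Real.exp (β * d) * d + p y0 * |d|
      ≤ ∑ y, (p y * Real.exp (β * (s y - c)) * (s y - c) + p y * |s y - c|) := by
    exact Finset.single_le_sum (fun y _ => hterm y) (Finset.mem_univ y0)
  rw [Finset.sum_add_distrib] at hsum
  have habs : 0 ≤ p y0 * |d| := by positivity
  have : M + 1 ≤ (∑ y, p y * Real.exp (β * (s y - c)) * (s y - c)) + M := by
    calc M + 1 ≤ p y0 * Real.exp (β * d) * d := hmain
    _ ≤ p y0 * Real.exp (β * d) * d + p y0 * |d| := by linarith
    _ ≤ _ := hsum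
  linarith

/-- for every c strictly between min s and max s, there is a unique
βstar such that the tilted distribution q_{βstar} has mean c. -/
theorem stmt_7 {S : Type*} [Fintype S] [Nonempty S] (p s : S → ℝ) (c : ℝ)
    (hp : ∀ y, 0 < p y) (hpsum : ∑ y, p y = 1)
    (hs : ∃ y₁ y₂ : S, s y₁ ≠ s y₂)
    (hc₁ : Finset.univ.inf' Finset.univ_nonempty s < c)
    (hc₂ : c < Finset.univ.sup' Finset.univ_nonempty s) :
    ∃! β : ℝ,
      (∑ y, (p y * Real.exp (β * s y) / (∑ j, p j * Real.exp (β * s j))) * s y) = c := by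
  classical
  set g : ℝ → ℝ := fun β => ∑ y, p y * Real.exp (β * (s y - c)) * (s y - c) with hg
  -- attain sup and inf
  obtain ⟨yhi, hyhi⟩ := Finset.exists_mem_eq_sup' Finset.univ_nonempty s
  obtain ⟨ylo, hylo⟩ := Finset.exists_mem_eq_inf' Finset.univ_nonempty s
  have hhi : c < s yhi := by rw [← hyhi.2]; exact hc₂
  have hlo : s ylo < c := by rw [← hylo.2]; exact hc₁
  -- g is strictly monotone
  have hderiv : ∀ β : ℝ, HasDerivAt g
      (∑ y, p y * (Real.exp (β * (s y - c)) * (s y - c)) * (s y - c)) β := by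
    intro β
    have : HasDerivAt (fun b : ℝ => ∑ y, p y * Real.exp (b * (s y - c)) * (s y - c))
        (∑ y ∈ Finset.univ, p y * (Real.exp (β * (s y - c)) * (s y - c)) * (s y - c)) β := by
      apply HasDerivAt.fun_sum
      intro y _
      have h1 : HasDerivAt (fun b : ℝ => b * (s y - c)) (s y - c) β := by
        simpa using hasDerivAt_mul_const (s y - c) (x := β)
      have h2 := h1.exp
      exact (h2.const_mul (p y)).mul_const (s y - c)
    exact this
  have hderivpos : ∀ β : ℝ,
      0 < ∑ y, p y * (Real.exp (β * (s y - c)) * (s y - c)) * (s y - c) := by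
    intro β
    apply Finset.sum_pos'
    · intro y _
      have he := Real.exp_pos (β * (s y - c))
      nlinarith [mul_nonneg (mul_pos (hp y) he).le (sq_nonneg (s y - c))]
    · refine ⟨yhi, Finset.mem_univ _, ?_⟩
      have he := Real.exp_pos (β * (s yhi - c))
      have hd := sub_pos.mpr hhi
      nlinarith [mul_pos (mul_pos (hp yhi) he) (mul_pos hd hd)]
  have hmono : StrictMono g := by
    apply strictMono_of_deriv_pos
    intro β
    rw [(hderiv β).deriv]
    exact hderivpos β
  -- existence of a zero of g
  obtain ⟨β₂, hβ₂⟩ := aux_pos p s c hp yhi hhi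
  obtain ⟨β₁', hβ₁'⟩ := aux_pos p (fun y => -s y) (-c) hp ylo (by simpa using hlo)
  have hβ₁ : g (-β₁') < 0 := by
    have : (∑ y, p y * Real.exp (β₁' * (-s y - -c)) * (-s y - -c))
        = -g (-β₁') := by
      rw [hg]
      rw [← Finset.sum_neg_distrib]
      apply Finset.sum_congr rfl
      intro y _
      ring_nf
    rw [this] at hβ₁'
    linarith
  have hgβ₂ : 0 < g β₂ := hβ₂
  have horder : -β₁' ≤ β₂ := by
    by_contra h
    push_neg at h
    have := hmono h
    linarith
  have hcont : ContinuousOn g (Set.Icc (-β₁') β₂) :=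
    (Continuous.continuousOn (by
      apply continuous_finset_sum
      intro y _
      continuity))
  have hivt := intermediate_value_Icc horder hcont
  have h0mem : (0 : ℝ) ∈ Set.Icc (g (-β₁')) (g β₂) := ⟨le_of_lt hβ₁, le_of_lt hgβ₂⟩
  obtain ⟨βstar, _, hβstar⟩ := hivt h0mem
  -- Z positivity and key equivalence
  have hZ : ∀ β : ℝ, 0 < ∑ j, p j * Real.exp (β * s j) := by
    intro β
    apply Finset.sum_pos
    · intro j _
      exact mul_pos (hp j) (Real.exp_pos _)
    · exact Finset.univ_nonempty
  have key : ∀ β : ℝ,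
      ((∑ y, (p y * Real.exp (β * s y) / (∑ j, p j * Real.exp (β * s j))) * s y) = c)
        ↔ g β = 0 := by
    intro β
    have hZβ := hZ β
    have hgeq : g β = Real.exp (-(β * c)) *
        ((∑ y, (p y * Real.exp (β * s y)) * s y) - c * (∑ j, p j * Real.exp (β * s j))) := by
      rw [hg]
      simp only [mul_sub, Finset.mul_sum, ← Finset.sum_sub_distrib]
      apply Finset.sum_congr rfl
      intro y _
      rw [show β * s y - β * c = β * s y + -(β * c) by ring, Real.exp_add]
      ring
    have hsumdiv : (∑ y, (p y * Real.exp (β * s y) / (∑ j, p j * Real.exp (β * s j))) * s y)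
        = (∑ y, (p y * Real.exp (β * s y)) * s y) / (∑ j, p j * Real.exp (β * s j)) := by
      rw [Finset.sum_div]
      apply Finset.sum_congr rfl
      intro y _
      ring
    rw [hsumdiv, hgeq]
    rw [div_eq_iff (ne_of_gt hZβ)]
    constructor
    · intro h
      rw [h]; ring
    · intro h
      rcases mul_eq_zero.mp h with h | h
      · exact absurd h (Real.exp_pos _).ne'
      · linarith
  refine ⟨βstar, (key βstar).mpr hβstar, ?_⟩
  intro β' h'
  exact hmono.injective (((key β').mp h').trans hβstar.symm)
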